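/- Let $p$ be a subharmonic, nonharmonic polynomial and define $\Lambda(z,\delta) = \sum_{j,k\ge 1}|A_{jk}(z)|\delta^{j+k}$ where $A_{jk}(z) = \frac{1}{j!k!}\frac{\partial^{j+k}p}{\partial z^j \partial \bar z^k}(z)$, and $\mu(z,\delta) = \inf_{j,k\ge 1}\left(\delta/|A_{jk}(z)|\right)^{1/(j+k)}$ (infimum over indices with $A_{jk}(z)\neq 0$). Then there are constants $c, C > 0$ depending only on the degree of $p$ such that for all $\delta > 0$ and all $z$, $c\,\delta \le \mu(z, \Lambda(z,\delta)) \le C\,\delta$. -/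

import Mathlib

open Finset Complex

/-- The coefficient `A_{jk}(z) = (1/(j!k!)) ∂^{j+k}p/∂z^j∂z̄^k (z)` of the
polynomial `p(z) = ∑_{m,n ≤ d} a m n · z^m · z̄^n`. -/
noncomputable def Acoef (d : ℕ) (a : ℕ → ℕ → ℂ) (j k : ℕ) (z : ℂ) : ℂ :=
  ∑ m ∈ Finset.range (d + 1), ∑ n ∈ Finset.range (d + 1),
    (m.choose j : ℂ) * (n.choose k : ℂ) * a m n * z ^ (m - j) * (starRingEnd ℂ z) ^ (n - k)

/-- The twist `T(w,z) = -2 Im (∑_{j≥1} (1/j!) ∂^j p/∂z^j (z) (w-z)^j)`. -/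
noncomputable def Twist (d : ℕ) (a : ℕ → ℕ → ℂ) (w z : ℂ) : ℝ :=
  -2 * (∑ j ∈ Finset.Icc 1 d, Acoef d a j 0 z * (w - z) ^ j).im

/-- `Λ(z,δ) = ∑_{j,k ≥ 1} |A_{jk}(z)| δ^{j+k}`. -/
noncomputable def Lam (d : ℕ) (a : ℕ → ℕ → ℂ) (z : ℂ) (δ : ℝ) : ℝ :=
  ∑ j ∈ Finset.Icc 1 d, ∑ k ∈ Finset.Icc 1 d,
    ‖Acoef d a j k z‖ * δ ^ (j + k)

/-- `μ(z,δ) = inf_{j,k ≥ 1, A_{jk}(z) ≠ 0} (|δ|/|A_{jk}(z)|)^{1/(j+k)}`. -/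
noncomputable def muF (d : ℕ) (a : ℕ → ℕ → ℂ) (z : ℂ) (δ : ℝ) : ℝ :=
  sInf {x : ℝ | ∃ j k : ℕ, 1 ≤ j ∧ 1 ≤ k ∧ Acoef d a j k z ≠ 0 ∧
    x = (|δ| / ‖Acoef d a j k z‖) ^ (1 / ((j : ℝ) + (k : ℝ)))}

/-- The Wirtinger derivative `∂f/∂z = (1/2)(∂f/∂x - i ∂f/∂y)`. -/
noncomputable def wDz (f : ℂ → ℂ) (z : ℂ) : ℂ :=
  (fderiv ℝ f z 1 - Complex.I * fderiv ℝ f z Complex.I) / 2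

/-- The Wirtinger derivative `∂f/∂z̄ = (1/2)(∂f/∂x + i ∂f/∂y)`. -/
noncomputable def wDzbar (f : ℂ → ℂ) (z : ℂ) : ℂ :=
  (fderiv ℝ f z 1 + Complex.I * fderiv ℝ f z Complex.I) / 2

/-- The nonisotropic pseudodistance `d_{NI}(z,w,t) = |z-w| + μ(z, t+T(w,z))`. -/
noncomputable def dNI (d : ℕ) (a : ℕ → ℕ → ℂ) (z w : ℂ) (t : ℝ) : ℝ :=
  ‖z - w‖ + muF d a z (t + Twist d a w z)

private lemma one_var (d m : ℕ) (hm : m ≤ d) (z s : ℂ) :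
    ∑ j ∈ Finset.Icc 1 d, (j : ℂ) * (m.choose j : ℂ) * z ^ (m - j) * s ^ (j - 1)
      = (m : ℂ) * (s + z) ^ (m - 1) := by
  rcases Nat.eq_zero_or_pos m with rfl | hm0
  · rw [Finset.sum_eq_zero]
    · simp
    · intro j hj
      rw [Finset.mem_Icc] at hj
      rw [Nat.choose_eq_zero_of_lt (by omega)]
      simp
  · rw [← Finset.sum_subset (Finset.Icc_subset_Icc_right hm) (fun j hj hj' => by
      rw [Finset.mem_Icc] at hj; rw [Finset.mem_Icc] at hj'
      rw [Nat.choose_eq_zero_of_lt (by omega)]; simp)]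
    rw [Finset.sum_subset (show Finset.Icc 1 m ⊆ Finset.range (m+1) by
        intro x hx; rw [Finset.mem_Icc] at hx; rw [Finset.mem_range]; omega)
      (fun j hj hj' => by
        rw [Finset.mem_range] at hj; rw [Finset.mem_Icc] at hj'
        have : j = 0 := by omega
        subst this; simp)]
    rw [Finset.sum_range_succ']
    have h2 : m - 1 + 1 = m := by omega
    rw [add_pow, h2, Finset.mul_sum]
    simp only [Nat.cast_zero, zero_mul, add_zero]
    refine Finset.sum_congr rfl fun i hi => ?_
    rw [Finset.mem_range] at hi
    have hch : m * (m-1).choose i = m.choose (i+1) * (i+1) := by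
      have := Nat.add_one_mul_choose_eq (m-1) i
      simp only [Nat.succ_eq_add_one, h2] at this; omega
    have hcast : (m : ℂ) * ((m-1).choose i : ℂ) = (m.choose (i+1) : ℂ) * ((i:ℂ)+1) := by
      exact_mod_cast congrArg (Nat.cast : ℕ → ℂ) hch
    have he1 : m - (i+1) = m - 1 - i := by omega
    have he2 : i + 1 - 1 = i := by omega
    rw [he1, he2]
    push_cast
    linear_combination (-(z^(m-1-i) * s^i)) * hcast

private lemma key (d : ℕ) (a : ℕ → ℕ → ℂ) (z w : ℂ) :
    Acoef d a 1 1 w = ∑ j ∈ Finset.Icc 1 d, ∑ k ∈ Finset.Icc 1 d,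
      (j : ℂ) * (k : ℂ) * Acoef d a j k z * (w - z) ^ (j - 1) *
        (starRingEnd ℂ (w - z)) ^ (k - 1) := by
  set s := w - z with hs
  have hw : s + z = w := by rw [hs]; ring
  have hwc : starRingEnd ℂ s + starRingEnd ℂ z = starRingEnd ℂ w := by
    rw [← map_add, hw]
  calc Acoef d a 1 1 w
      = ∑ m ∈ Finset.range (d+1), ∑ n ∈ Finset.range (d+1),
          ((m:ℂ) * w ^ (m-1)) * ((n:ℂ) * (starRingEnd ℂ w) ^ (n-1)) * a m n := by
        unfold Acoef
        refine Finset.sum_congr rfl fun m _ => Finset.sum_congr rfl fun n _ => ?_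
        simp only [Nat.choose_one_right]
        ring
    _ = ∑ p ∈ Finset.range (d+1) ×ˢ Finset.range (d+1),
          ∑ q ∈ Finset.Icc 1 d ×ˢ Finset.Icc 1 d,
          ((q.1:ℂ) * (p.1.choose q.1 : ℂ) * z ^ (p.1 - q.1) * s ^ (q.1 - 1)) *
          ((q.2:ℂ) * (p.2.choose q.2 : ℂ) * (starRingEnd ℂ z) ^ (p.2 - q.2) *
            (starRingEnd ℂ s) ^ (q.2 - 1)) * a p.1 p.2 := by
        rw [Finset.sum_product]
        refine Finset.sum_congr rfl fun m hm => ?_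
        rw [Finset.mem_range] at hm
        refine Finset.sum_congr rfl fun n hn => ?_
        rw [Finset.mem_range] at hn
        rw [Finset.sum_product]
        have hA : ∀ j ∈ Finset.Icc 1 d,
            (∑ k ∈ Finset.Icc 1 d,
              ((j:ℂ) * (m.choose j : ℂ) * z ^ (m - j) * s ^ (j - 1)) *
              ((k:ℂ) * (n.choose k : ℂ) * (starRingEnd ℂ z) ^ (n - k) *
                (starRingEnd ℂ s) ^ (k - 1)) * a m n)
            = ((j:ℂ) * (m.choose j : ℂ) * z ^ (m - j) * s ^ (j - 1)) *
              ((n:ℂ) * (starRingEnd ℂ w) ^ (n-1)) * a m n := by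
          intro j _
          rw [← Finset.sum_mul, ← Finset.mul_sum]
          rw [one_var d n (by omega) (starRingEnd ℂ z) (starRingEnd ℂ s), hwc]
        rw [Finset.sum_congr rfl hA, ← Finset.sum_mul, ← Finset.sum_mul,
          one_var d m (by omega) z s, hw]
    _ = ∑ q ∈ Finset.Icc 1 d ×ˢ Finset.Icc 1 d,
          ∑ p ∈ Finset.range (d+1) ×ˢ Finset.range (d+1),
          ((q.1:ℂ) * (p.1.choose q.1 : ℂ) * z ^ (p.1 - q.1) * s ^ (q.1 - 1)) *
          ((q.2:ℂ) * (p.2.choose q.2 : ℂ) * (starRingEnd ℂ z) ^ (p.2 - q.2) *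
            (starRingEnd ℂ s) ^ (q.2 - 1)) * a p.1 p.2 := Finset.sum_comm
    _ = ∑ j ∈ Finset.Icc 1 d, ∑ k ∈ Finset.Icc 1 d,
          (j : ℂ) * (k : ℂ) * Acoef d a j k z * s ^ (j - 1) *
            (starRingEnd ℂ s) ^ (k - 1) := by
        rw [Finset.sum_product]
        refine Finset.sum_congr rfl fun j _ => Finset.sum_congr rfl fun k _ => ?_
        rw [Finset.sum_product]
        unfold Acoef
        simp only [Finset.mul_sum, Finset.sum_mul]
        refine Finset.sum_congr rfl fun m _ => Finset.sum_congr rfl fun n _ => ?_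
        ring

private lemma Acoef_eq_zero_left (d : ℕ) (a : ℕ → ℕ → ℂ) (j k : ℕ) (z : ℂ) (h : d < j) :
    Acoef d a j k z = 0 := by
  unfold Acoef
  refine Finset.sum_eq_zero fun m hm => Finset.sum_eq_zero fun n hn => ?_
  rw [Finset.mem_range] at hm
  rw [Nat.choose_eq_zero_of_lt (by omega)]
  simp

private lemma Acoef_eq_zero_right (d : ℕ) (a : ℕ → ℕ → ℂ) (j k : ℕ) (z : ℂ) (h : d < k) :
    Acoef d a j k z = 0 := by
  unfold Acoef
  refine Finset.sum_eq_zero fun m hm => Finset.sum_eq_zero fun n hn => ?_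
  rw [Finset.mem_range] at hn
  rw [Nat.choose_eq_zero_of_lt (show n < k by omega)]
  simp

private lemma exists_nonzero (d : ℕ) (a : ℕ → ℕ → ℂ) (z₀ : ℂ)
    (h : Acoef d a 1 1 z₀ ≠ 0) (z : ℂ) :
    ∃ j k : ℕ, j ∈ Finset.Icc 1 d ∧ k ∈ Finset.Icc 1 d ∧ Acoef d a j k z ≠ 0 := by
  by_contra hc
  push_neg at hc
  apply h
  rw [key d a z z₀]
  refine Finset.sum_eq_zero fun j hj => Finset.sum_eq_zero fun k hk => ?_
  rw [hc j k hj hk]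
  ring


/-- For a subharmonic, nonharmonic polynomial `p` of degree `d` (encoded by
coefficients `a`), `μ(z, Λ(z,δ)) ∼ δ` with constants depending only on `d`. -/
theorem mu_lam_approx_inverse (d : ℕ) :
    ∃ c C : ℝ, 0 < c ∧ 0 < C ∧
      ∀ a : ℕ → ℕ → ℂ,
        (∀ m n, d < m + n → a m n = 0) →
        (∀ m n, (starRingEnd ℂ) (a m n) = a n m) →
        (∀ z : ℂ, 0 ≤ (Acoef d a 1 1 z).re) →
        (∃ z₀ : ℂ, Acoef d a 1 1 z₀ ≠ 0) →
        ∀ (z : ℂ) (δ : ℝ), 0 < δ →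
          c * δ ≤ muF d a z (Lam d a z δ) ∧ muF d a z (Lam d a z δ) ≤ C * δ := by
  refine ⟨1, (d:ℝ)^2 + 1, one_pos, by positivity, ?_⟩
  rintro a _ _ _ ⟨z₀, hz₀⟩ z δ hδ
  obtain ⟨j₀, k₀, hj₀, hk₀, hA₀⟩ := exists_nonzero d a z₀ hz₀ z
  set Λ := Lam d a z δ with hΛdef
  -- each term of Lam is nonneg
  have hterm_nonneg : ∀ j k : ℕ,
      0 ≤ ‖Acoef d a j k z‖ * δ ^ (j + k) := fun j k => by positivity
  -- Λ ≥ each single term (for j,k in Icc)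
  have hsingle : ∀ j k : ℕ, j ∈ Finset.Icc 1 d → k ∈ Finset.Icc 1 d →
      ‖Acoef d a j k z‖ * δ ^ (j + k) ≤ Λ := by
    intro j k hj hk
    rw [hΛdef]
    unfold Lam
    calc ‖Acoef d a j k z‖ * δ ^ (j + k)
        ≤ ∑ k' ∈ Finset.Icc 1 d, ‖Acoef d a j k' z‖ * δ ^ (j + k') :=
          Finset.single_le_sum (fun k' _ => hterm_nonneg j k') hk
      _ ≤ _ := Finset.single_le_sum
          (fun j' _ => Finset.sum_nonneg fun k' _ => hterm_nonneg j' k') hj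
  have hΛpos : 0 < Λ := by
    have h1 : (0:ℝ) < ‖Acoef d a j₀ k₀ z‖ * δ ^ (j₀ + k₀) := by
      have := norm_pos_iff.mpr hA₀
      positivity
    exact lt_of_lt_of_le h1 (hsingle j₀ k₀ hj₀ hk₀)
  have hΛabs : |Λ| = Λ := abs_of_pos hΛpos
  set S := {x : ℝ | ∃ j k : ℕ, 1 ≤ j ∧ 1 ≤ k ∧ Acoef d a j k z ≠ 0 ∧
    x = (|Λ| / ‖Acoef d a j k z‖) ^ (1 / ((j : ℝ) + (k : ℝ)))} with hSdef
  have hmuf : muF d a z Λ = sInf S := rfl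
  -- generic: every element of S is ≥ δ
  have hlow : ∀ x ∈ S, δ ≤ x := by
    rintro x ⟨j, k, hj1, hk1, hA, rfl⟩
    have hjd : j ≤ d := by
      by_contra h; exact hA (Acoef_eq_zero_left d a j k z (by omega))
    have hkd : k ≤ d := by
      by_contra h; exact hA (Acoef_eq_zero_right d a j k z (by omega))
    have hApos := norm_pos_iff.mpr hA
    have hq : (0:ℝ) < (j:ℝ) + (k:ℝ) := by positivity
    have hle : δ ^ ((j:ℝ) + (k:ℝ)) ≤ |Λ| / ‖Acoef d a j k z‖ := by
      rw [hΛabs, le_div_iff₀ hApos]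
      have : δ ^ ((j:ℝ) + (k:ℝ)) = δ ^ (j + k) := by
        rw [← Real.rpow_natCast δ (j+k)]
        push_cast
        ring_nf
      rw [this, mul_comm]
      exact hsingle j k (Finset.mem_Icc.2 ⟨hj1, hjd⟩) (Finset.mem_Icc.2 ⟨hk1, hkd⟩)
    calc δ = (δ ^ ((j:ℝ) + (k:ℝ))) ^ (1 / ((j:ℝ) + (k:ℝ))) := by
          rw [← Real.rpow_mul hδ.le, mul_one_div, div_self hq.ne', Real.rpow_one]
      _ ≤ (|Λ| / ‖Acoef d a j k z‖) ^ (1 / ((j:ℝ) + (k:ℝ))) :=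
          Real.rpow_le_rpow (Real.rpow_nonneg hδ.le _) hle (by positivity)
  have hSne : S.Nonempty := by
    rw [Finset.mem_Icc] at hj₀ hk₀
    exact ⟨_, j₀, k₀, hj₀.1, hk₀.1, hA₀, rfl⟩
  have hbdd : BddBelow S := by
    refine ⟨0, ?_⟩
    rintro x ⟨j, k, _, _, _, rfl⟩
    positivity
  constructor
  · rw [one_mul, hmuf]
    exact le_csInf hSne hlow
  · -- upper bound
    rw [hmuf]
    -- pick maximizing pair
    have hPne : (Finset.Icc 1 d ×ˢ Finset.Icc 1 d).Nonempty := ⟨(j₀, k₀), Finset.mem_product.2 ⟨hj₀, hk₀⟩⟩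
    obtain ⟨b, hbP, hbmax⟩ := Finset.exists_max_image (Finset.Icc 1 d ×ˢ Finset.Icc 1 d)
      (fun p => ‖Acoef d a p.1 p.2 z‖ * δ ^ (p.1 + p.2)) hPne
    obtain ⟨hb1, hb2⟩ := Finset.mem_product.1 hbP
    rw [Finset.mem_Icc] at hb1 hb2
    have hfb_pos : 0 < ‖Acoef d a b.1 b.2 z‖ * δ ^ (b.1 + b.2) := by
      refine lt_of_lt_of_le ?_ (hbmax (j₀, k₀) (Finset.mem_product.2 ⟨hj₀, hk₀⟩))
      have := norm_pos_iff.mpr hA₀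
      positivity
    have hAb : Acoef d a b.1 b.2 z ≠ 0 := by
      intro h0
      rw [h0] at hfb_pos
      simp at hfb_pos
    have hAbpos := norm_pos_iff.mpr hAb
    have hΛle : Λ ≤ (d:ℝ)^2 * (‖Acoef d a b.1 b.2 z‖ * δ ^ (b.1 + b.2)) := by
      have hcard : ((Finset.Icc 1 d ×ˢ Finset.Icc 1 d).card : ℝ) = (d:ℝ)^2 := by
        rw [Finset.card_product, Nat.card_Icc, show d + 1 - 1 = d from rfl]
        push_cast
        ring
      calc Λ = ∑ p ∈ Finset.Icc 1 d ×ˢ Finset.Icc 1 d,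
            ‖Acoef d a p.1 p.2 z‖ * δ ^ (p.1 + p.2) := by
            rw [hΛdef]; unfold Lam; rw [Finset.sum_product]
        _ ≤ (Finset.Icc 1 d ×ˢ Finset.Icc 1 d).card •
              (‖Acoef d a b.1 b.2 z‖ * δ ^ (b.1 + b.2)) :=
            Finset.sum_le_card_nsmul _ _ _ (fun p hp => hbmax p hp)
        _ = _ := by rw [nsmul_eq_mul, hcard]
    -- the element of S given by b
    set q : ℝ := (b.1 : ℝ) + (b.2 : ℝ) with hqdef
    have hq : (0:ℝ) < q := by
      rw [hqdef]
      have : (1:ℝ) ≤ (b.1:ℝ) := by exact_mod_cast hb1.1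
      have : (1:ℝ) ≤ (b.2:ℝ) := by exact_mod_cast hb2.1
      positivity
    have hq2 : (2:ℝ) ≤ q := by
      rw [hqdef]
      have h1 : (1:ℝ) ≤ (b.1:ℝ) := by exact_mod_cast hb1.1
      have h2 : (1:ℝ) ≤ (b.2:ℝ) := by exact_mod_cast hb2.1
      linarith
    have hxS : (|Λ| / ‖Acoef d a b.1 b.2 z‖) ^ (1/q) ∈ S :=
      ⟨b.1, b.2, hb1.1, hb2.1, hAb, rfl⟩
    have hd1 : (1:ℝ) ≤ (d:ℝ)^2 := by
      have : 1 ≤ d := le_trans hb1.1 hb1.2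
      have : (1:ℝ) ≤ (d:ℝ) := by exact_mod_cast this
      nlinarith
    have hxle : (|Λ| / ‖Acoef d a b.1 b.2 z‖) ^ (1/q) ≤ ((d:ℝ)^2 + 1) * δ := by
      have hdiv : |Λ| / ‖Acoef d a b.1 b.2 z‖ ≤ (d:ℝ)^2 * δ ^ (b.1 + b.2) := by
        rw [hΛabs, div_le_iff₀ hAbpos]
        calc Λ ≤ (d:ℝ)^2 * (‖Acoef d a b.1 b.2 z‖ * δ ^ (b.1 + b.2)) := hΛle
          _ = (d:ℝ)^2 * δ ^ (b.1 + b.2) * ‖Acoef d a b.1 b.2 z‖ := by ring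
      have hpow : δ ^ (b.1 + b.2) = δ ^ q := by
        rw [hqdef, ← Real.rpow_natCast δ (b.1 + b.2)]
        push_cast
        ring_nf
      calc (|Λ| / ‖Acoef d a b.1 b.2 z‖) ^ (1/q)
          ≤ ((d:ℝ)^2 * δ ^ q) ^ (1/q) := by
            rw [← hpow]
            exact Real.rpow_le_rpow (by positivity) hdiv (by positivity)
        _ = ((d:ℝ)^2) ^ (1/q) * δ := by
            rw [Real.mul_rpow (by positivity) (Real.rpow_nonneg hδ.le _),
              ← Real.rpow_mul hδ.le, mul_one_div, div_self hq.ne', Real.rpow_one]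
        _ ≤ ((d:ℝ)^2 + 1) * δ := by
            refine mul_le_mul_of_nonneg_right ?_ hδ.le
            calc ((d:ℝ)^2) ^ (1/q) ≤ ((d:ℝ)^2) ^ (1:ℝ) :=
                Real.rpow_le_rpow_of_exponent_le hd1 (by
                  rw [div_le_one hq]; linarith)
              _ = (d:ℝ)^2 := Real.rpow_one _
              _ ≤ (d:ℝ)^2 + 1 := by linarith
    exact le_trans (csInf_le hbdd hxS) hxle
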